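/- Let A be an artin algebra and N an indecomposable non-injective A-module with id_A N ≥ 2. Then Hom_A(τ_A^{-} N, A) ≠ 0, where τ_A^{-} = TrD is the inverse Auslander-Reiten translation. -/

import Mathlib

universe u

variable {A : Type u} [Ring A]

/-- The category of (right) `A`-modules, modeled as modules over `Aᵐᵒᵖ`. -/
abbrev Modc (A : Type u) [Ring A] := ModuleCat.{u} Aᵐᵒᵖ

/-- A module is finitely generated. -/
def FinGen (M : Modc A) : Prop := Module.Finite Aᵐᵒᵖ M

/-- A module is indecomposable: nonzero, and its endomorphism ring has no
nontrivial idempotents. -/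
def Indec (M : Modc A) : Prop :=
  Nontrivial M ∧ ∀ e : M →ₗ[Aᵐᵒᵖ] M, e ∘ₗ e = e → e = 0 ∨ e = LinearMap.id

def IsSplitMono {M N : Modc A} (f : M →ₗ[Aᵐᵒᵖ] N) : Prop :=
  ∃ g : N →ₗ[Aᵐᵒᵖ] M, g ∘ₗ f = LinearMap.id

def IsSplitEpi {M N : Modc A} (f : M →ₗ[Aᵐᵒᵖ] N) : Prop :=
  ∃ g : N →ₗ[Aᵐᵒᵖ] M, f ∘ₗ g = LinearMap.id

/-- An irreducible morphism between modules. -/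
def IsIrred {M N : Modc A} (f : M →ₗ[Aᵐᵒᵖ] N) : Prop :=
  ¬ IsSplitMono f ∧ ¬ IsSplitEpi f ∧
  ∀ (L : Modc A) (g : M →ₗ[Aᵐᵒᵖ] L) (h : L →ₗ[Aᵐᵒᵖ] N),
    h ∘ₗ g = f → IsSplitEpi h ∨ IsSplitMono g

/-- Neighbors in the Auslander-Reiten quiver: both finitely generated
indecomposable, and isomorphic or linked by an irreducible map. -/
def Neighbor (X Y : Modc A) : Prop :=
  FinGen X ∧ FinGen Y ∧ Indec X ∧ Indec Y ∧
  (Nonempty (X ≃ₗ[Aᵐᵒᵖ] Y) ∨ (∃ f : X →ₗ[Aᵐᵒᵖ] Y, IsIrred f) ∨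
    (∃ f : Y →ₗ[Aᵐᵒᵖ] X, IsIrred f))

/-- A component of the Auslander-Reiten quiver `Γ_A`, viewed as the class of
indecomposable finitely generated modules lying in it. -/
def IsARComponent (C : Set (Modc A)) : Prop :=
  C.Nonempty ∧ (∀ X ∈ C, FinGen X ∧ Indec X) ∧
  (∀ X ∈ C, ∀ Y : Modc A, Neighbor X Y → Y ∈ C) ∧
  (∀ X ∈ C, ∀ Y ∈ C, Relation.ReflTransGen Neighbor X Y)

/-- The annihilator of a class of modules. -/
def annSet (C : Set (Modc A)) : Set A :=
  {a | ∀ X ∈ C, ∀ x : X, MulOpposite.op a • x = 0}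

/-- The annihilator of a single module. -/
def annM (M : Modc A) : Set A := {a | ∀ x : M, MulOpposite.op a • x = 0}

/-- Membership in `add C`: isomorphic to a finite direct sum of modules in `C`. -/
def InAdd (C : Set (Modc A)) (M : Modc A) : Prop :=
  ∃ (k : ℕ) (F : Fin k → Modc A), (∀ i, F i ∈ C) ∧
    Nonempty (M ≃ₗ[Aᵐᵒᵖ] ((i : Fin k) → F i))

/-- An external short path of `C`: nonzero non-isomorphisms `X → Y → Z` between
indecomposables with `X, Z ∈ C` and `Y ∉ C`. -/
def HasExtShortPath (C : Set (Modc A)) : Prop :=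
  ∃ X Y Z : Modc A, X ∈ C ∧ Z ∈ C ∧ Y ∉ C ∧ FinGen Y ∧ Indec Y ∧
    (∃ f : X →ₗ[Aᵐᵒᵖ] Y, f ≠ 0 ∧ ¬ Function.Bijective f) ∧
    (∃ g : Y →ₗ[Aᵐᵒᵖ] Z, g ≠ 0 ∧ ¬ Function.Bijective g)

/-- Projective dimension at most one. -/
def PdLE1 (X : Modc A) : Prop :=
  ∃ (P₁ P₀ : Modc A) (f : P₁ →ₗ[Aᵐᵒᵖ] P₀) (g : P₀ →ₗ[Aᵐᵒᵖ] X),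
    Module.Projective Aᵐᵒᵖ P₁ ∧ Module.Projective Aᵐᵒᵖ P₀ ∧
    Function.Injective f ∧ Function.Surjective g ∧
    LinearMap.range f = LinearMap.ker g

/-- Projective dimension at most two. -/
def PdLE2 (X : Modc A) : Prop :=
  ∃ (P₂ P₁ P₀ : Modc A) (f : P₂ →ₗ[Aᵐᵒᵖ] P₁) (g : P₁ →ₗ[Aᵐᵒᵖ] P₀)
    (h : P₀ →ₗ[Aᵐᵒᵖ] X),
    Module.Projective Aᵐᵒᵖ P₂ ∧ Module.Projective Aᵐᵒᵖ P₁ ∧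
    Module.Projective Aᵐᵒᵖ P₀ ∧
    Function.Injective f ∧ Function.Surjective h ∧
    LinearMap.range f = LinearMap.ker g ∧ LinearMap.range g = LinearMap.ker h

/-- Injective dimension at most one. -/
def IdLE1 (X : Modc A) : Prop :=
  ∃ (I₀ I₁ : Modc A) (f : X →ₗ[Aᵐᵒᵖ] I₀) (g : I₀ →ₗ[Aᵐᵒᵖ] I₁),
    Module.Injective Aᵐᵒᵖ I₀ ∧ Module.Injective Aᵐᵒᵖ I₁ ∧
    Function.Injective f ∧ Function.Surjective g ∧
    LinearMap.range f = LinearMap.ker g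

/-- An almost split (Auslander-Reiten) sequence `0 → T → E → X → 0`; then
`T = τ_A X` and `X = τ_A⁻ T`. -/
def IsAlmostSplitSeq (T E X : Modc A) (f : T →ₗ[Aᵐᵒᵖ] E) (g : E →ₗ[Aᵐᵒᵖ] X) : Prop :=
  Function.Injective f ∧ Function.Surjective g ∧
  LinearMap.range f = LinearMap.ker g ∧
  Indec T ∧ Indec X ∧ ¬ IsSplitEpi g ∧
  (∀ (V : Modc A) (h : V →ₗ[Aᵐᵒᵖ] X), ¬ IsSplitEpi h → ∃ k : V →ₗ[Aᵐᵒᵖ] E, g ∘ₗ k = h) ∧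
  (∀ (V : Modc A) (h : T →ₗ[Aᵐᵒᵖ] V), ¬ IsSplitMono h → ∃ k : E →ₗ[Aᵐᵒᵖ] V, k ∘ₗ f = h)

/-- A generator of the radical of `mod A`: a map factoring through a
non-isomorphism between finitely generated indecomposables. -/
def IsNonIsoGen {X Y : Modc A} (f : X →ₗ[Aᵐᵒᵖ] Y) : Prop :=
  ∃ (M N : Modc A) (u : M →ₗ[Aᵐᵒᵖ] N) (g : X →ₗ[Aᵐᵒᵖ] M) (h : N →ₗ[Aᵐᵒᵖ] Y),
    FinGen M ∧ Indec M ∧ FinGen N ∧ Indec N ∧ ¬ Function.Bijective u ∧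
    f = h ∘ₗ (u ∘ₗ g)

/-- The radical `rad_A(X, Y)`: the ideal of `mod A` generated by all
non-isomorphisms between indecomposables. -/
def rad1 (X Y : Modc A) : AddSubgroup (X →ₗ[Aᵐᵒᵖ] Y) :=
  AddSubgroup.closure {f | IsNonIsoGen f}

/-- Powers of the radical: `radPow n = rad_A^(n+1)`. -/
def radPow : ℕ → (X Y : Modc A) → AddSubgroup (X →ₗ[Aᵐᵒᵖ] Y)
  | 0 => rad1
  | n + 1 => fun X Y => AddSubgroup.closure
      {f | ∃ (Z : Modc A) (g : X →ₗ[Aᵐᵒᵖ] Z) (h : Z →ₗ[Aᵐᵒᵖ] Y),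
        FinGen Z ∧ g ∈ radPow n X Z ∧ h ∈ rad1 Z Y ∧ f = h ∘ₗ g}

/-- The infinite radical `rad_A^∞(X, Y) = ⋂_{i ≥ 1} rad_A^i(X, Y)`. -/
def radInf (X Y : Modc A) : AddSubgroup (X →ₗ[Aᵐᵒᵖ] Y) := ⨅ n : ℕ, radPow n X Y

/-- `X` is (isomorphic to) a direct summand of `M`. -/
def IsDirectSummandOf (X M : Modc A) : Prop :=
  ∃ (ι : X →ₗ[Aᵐᵒᵖ] M) (ρ : M →ₗ[Aᵐᵒᵖ] X), ρ ∘ₗ ι = LinearMap.id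




private theorem exists_factor' {R F Q W : Type*} [Ring R] [AddCommGroup F] [Module R F]
    [AddCommGroup Q] [Module R Q] [AddCommGroup W] [Module R W]
    (g : F →ₗ[R] Q) (hg : Function.Surjective g) (t : F →ₗ[R] W)
    (ht : LinearMap.ker g ≤ LinearMap.ker t) :
    ∃ c : Q →ₗ[R] W, c ∘ₗ g = t := by
  let e := g.quotKerEquivOfSurjective hg
  refine ⟨(LinearMap.ker g).liftQ t ht ∘ₗ (e.symm : Q →ₗ[R] F ⧸ LinearMap.ker g), ?_⟩
  ext x
  have h1 : e (Submodule.Quotient.mk x) = g x := rfl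
  have h2 : e.symm (g x) = Submodule.Quotient.mk x := by
    rw [← h1, LinearEquiv.symm_apply_apply]
  simp [LinearMap.comp_apply, h2]

private theorem split_epi_of_split_mono' {R M E Q : Type*} [Ring R]
    [AddCommGroup M] [Module R M] [AddCommGroup E] [Module R E]
    [AddCommGroup Q] [Module R Q]
    (u : M →ₗ[R] E) (π : E →ₗ[R] Q) (hsurj : Function.Surjective π)
    (hexact : LinearMap.range u = LinearMap.ker π)
    (r : E →ₗ[R] M) (hr : r ∘ₗ u = LinearMap.id) :
    ∃ s : Q →ₗ[R] E, π ∘ₗ s = LinearMap.id := by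
  have hπu : ∀ m, π (u m) = 0 := fun m => by
    have : u m ∈ LinearMap.ker π := hexact ▸ LinearMap.mem_range_self u m
    exact this
  obtain ⟨c, hc⟩ := exists_factor' π hsurj (LinearMap.id - u ∘ₗ r) (by
    intro x hx
    have hx' : x ∈ LinearMap.range u := hexact.symm ▸ hx
    obtain ⟨m, rfl⟩ := hx'
    have hrm : r (u m) = m := LinearMap.congr_fun hr m
    simp [LinearMap.mem_ker, hrm])
  refine ⟨c, ?_⟩
  ext q
  obtain ⟨x, rfl⟩ := hsurj q
  have hx := LinearMap.congr_fun hc x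
  simp only [LinearMap.comp_apply, LinearMap.sub_apply, LinearMap.id_apply] at hx ⊢
  rw [hx]
  simp [hπu]

/-- The ring `A`, as a right module over itself, is isomorphic (as a module over `Aᵐᵒᵖ`)
to `Aᵐᵒᵖ` regarded as a module over itself. -/
private def opToA (A : Type u) [Ring A] : Aᵐᵒᵖ →ₗ[Aᵐᵒᵖ] A where
  toFun := MulOpposite.unop
  map_add' _ _ := rfl
  map_smul' _ _ := rfl

private theorem opToA_injective (A : Type u) [Ring A] : Function.Injective (opToA A) :=
  MulOpposite.unop_injective

private theorem key_lemma {A : Type u} [Ring A] {N F N' : Modc A}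
    (f : N →ₗ[Aᵐᵒᵖ] F) (g : F →ₗ[Aᵐᵒᵖ] N')
    (gsurj : Function.Surjective g)
    (hexact : LinearMap.range f = LinearMap.ker g)
    (hgns : ¬ IsSplitEpi g)
    (hleft : ∀ (V : Modc A) (h : N →ₗ[Aᵐᵒᵖ] V), ¬ IsSplitMono h → ∃ k : F →ₗ[Aᵐᵒᵖ] V, k ∘ₗ f = h)
    (hcon : ∀ φ : N' →ₗ[Aᵐᵒᵖ] A, φ = 0)
    (E Y : Type u) [AddCommGroup E] [Module Aᵐᵒᵖ E] [AddCommGroup Y] [Module Aᵐᵒᵖ Y]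
    (u : N →ₗ[Aᵐᵒᵖ] E) (π : E →ₗ[Aᵐᵒᵖ] Y) (β : Y →ₗ[Aᵐᵒᵖ] A)
    (hβ : Function.Injective β) (uinj : Function.Injective u)
    (πsurj : Function.Surjective π)
    (hex : LinearMap.range u = LinearMap.ker π) :
    ∃ s : Y →ₗ[Aᵐᵒᵖ] E, π ∘ₗ s = LinearMap.id := by
  by_cases hsm : ∃ r : E →ₗ[Aᵐᵒᵖ] N, r ∘ₗ u = LinearMap.id
  · obtain ⟨r, hr⟩ := hsm
    exact split_epi_of_split_mono' u π πsurj hex r hr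
  · obtain ⟨k, hk⟩ := hleft (ModuleCat.of Aᵐᵒᵖ E) u hsm
    have hker : LinearMap.ker g ≤ LinearMap.ker (π ∘ₗ k) := by
      intro x hx
      have hx' : x ∈ LinearMap.range f := hexact.symm ▸ hx
      obtain ⟨n, rfl⟩ := hx'
      have hkf : k (f n) = u n := LinearMap.congr_fun hk n
      have hπu : π (u n) = 0 := by
        have hm : u n ∈ LinearMap.ker π := hex ▸ LinearMap.mem_range_self u n
        exact hm
      show π (k (f n)) = 0
      rw [hkf]
      exact hπu
    obtain ⟨c, hc⟩ := exists_factor' g gsurj (π ∘ₗ k) hker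
    have hc0 : c = 0 := by
      ext y
      apply hβ
      have h3 := LinearMap.congr_fun (hcon (β ∘ₗ c)) y
      simpa using h3
    have hpk : ∀ x, π (k x) = 0 := fun x => by
      have h4 := LinearMap.congr_fun hc x
      rw [hc0] at h4
      simpa using h4.symm
    have hrange : ∀ x, k x ∈ LinearMap.range u := fun x => by
      rw [hex]; exact hpk x
    let e := LinearEquiv.ofInjective u uinj
    let t : F →ₗ[Aᵐᵒᵖ] N := e.symm.toLinearMap ∘ₗ LinearMap.codRestrict _ k hrange
    have hcoe : ∀ n : N, (e n : E) = u n := fun n => rfl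
    have hut : ∀ x, u (t x) = k x := fun x => by
      have h5 : e (e.symm ⟨k x, hrange x⟩) = ⟨k x, hrange x⟩ := e.apply_symm_apply _
      have h6 := congrArg Subtype.val h5
      rw [hcoe] at h6
      exact h6
    have htf : t ∘ₗ f = LinearMap.id := by
      ext n
      apply uinj
      simp only [LinearMap.comp_apply, LinearMap.id_apply]
      rw [hut]
      exact LinearMap.congr_fun hk n
    obtain ⟨s, hs⟩ := split_epi_of_split_mono' f g gsurj hexact t htf
    exact absurd ⟨s, hs⟩ hgns

private theorem baer_quotient {R M I : Type u} [Ring R] [AddCommGroup M] [Module R M]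
    [AddCommGroup I] [Module R I] [inj : Module.Injective R I]
    (ι : M →ₗ[R] I) (hι : Function.Injective ι)
    (key : ∀ (J : Ideal R) (E : Type u) [AddCommGroup E] [Module R E]
      (u : M →ₗ[R] E) (π : E →ₗ[R] ↥J),
      Function.Injective u → Function.Surjective π →
      LinearMap.range u = LinearMap.ker π →
      ∃ s : ↥J →ₗ[R] E, π ∘ₗ s = LinearMap.id) :
    Module.Baer R (I ⧸ LinearMap.range ι) := by
  intro J j
  set q := (LinearMap.range ι).mkQ with hq
  let d : (↥J × I) →ₗ[R] (I ⧸ LinearMap.range ι) :=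
    j ∘ₗ LinearMap.fst R ↥J I - q ∘ₗ LinearMap.snd R ↥J I
  have hd : ∀ p : ↥J × I, p ∈ LinearMap.ker d ↔ j p.1 = q p.2 := fun p => by
    simp [d, LinearMap.mem_ker, sub_eq_zero]
  have h0 : ∀ n : M, (LinearMap.prod 0 ι) n ∈ LinearMap.ker d := fun n => by
    rw [hd]
    have hz : q (ι n) = 0 := by
      rw [hq, Submodule.mkQ_apply, Submodule.Quotient.mk_eq_zero]
      exact ⟨n, rfl⟩
    simp [hz]
  let u : M →ₗ[R] ↥(LinearMap.ker d) := LinearMap.codRestrict _ (LinearMap.prod 0 ι) h0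
  let π : ↥(LinearMap.ker d) →ₗ[R] ↥J := LinearMap.fst R ↥J I ∘ₗ (LinearMap.ker d).subtype
  have hu : ∀ n, ((u n : ↥J × I)) = (0, ι n) := fun n => rfl
  have hπ : ∀ x : ↥(LinearMap.ker d), π x = (x : ↥J × I).1 := fun x => rfl
  have uinj : Function.Injective u := by
    intro a b hab
    apply hι
    have h2 := congrArg (fun z : ↥(LinearMap.ker d) => ((z : ↥J × I)).2) hab
    simpa [hu] using h2
  have πsurj : Function.Surjective π := by
    intro x
    obtain ⟨i₀, hi₀⟩ := Submodule.mkQ_surjective (LinearMap.range ι) (j x)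
    exact ⟨⟨(x, i₀), (hd _).2 (by simpa [hq] using hi₀.symm)⟩, rfl⟩
  have hex : LinearMap.range u = LinearMap.ker π := by
    apply le_antisymm
    · rintro _ ⟨n, rfl⟩
      show π (u n) = 0
      rw [hπ, hu]
    · rintro x hx
      have h1 : (x : ↥J × I).1 = 0 := hx
      have h2 : j (x : ↥J × I).1 = q (x : ↥J × I).2 := (hd _).1 x.2
      rw [h1, map_zero] at h2
      have h3 : (x : ↥J × I).2 ∈ LinearMap.range ι := by
        rwa [hq, eq_comm, Submodule.mkQ_apply, Submodule.Quotient.mk_eq_zero] at h2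
      obtain ⟨n, hn⟩ := h3
      refine ⟨n, ?_⟩
      apply Subtype.ext
      rw [hu]
      exact Prod.ext h1.symm hn
  obtain ⟨s, hs⟩ := key J (↥(LinearMap.ker d)) u π uinj πsurj hex
  let h₀ : ↥J →ₗ[R] I := LinearMap.snd R ↥J I ∘ₗ (LinearMap.ker d).subtype ∘ₗ s
  have hqh₀ : ∀ x : ↥J, q (h₀ x) = j x := fun x => by
    have h1 : π (s x) = x := LinearMap.congr_fun hs x
    have h2 : j ((s x : ↥J × I)).1 = q ((s x : ↥J × I)).2 := (hd _).1 (s x).2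
    rw [hπ] at h1
    rw [h1] at h2
    exact h2.symm
  obtain ⟨h, hh⟩ := inj.out J.subtype J.injective_subtype h₀
  refine ⟨q ∘ₗ h, fun x mem => ?_⟩
  have h7 := hh ⟨x, mem⟩
  simp only [LinearMap.comp_apply]
  have h8 : h x = h₀ ⟨x, mem⟩ := h7
  rw [h8]
  exact hqh₀ _


/-- If `N` is indecomposable non-injective with `id_A N ≥ 2`,
then `Hom_A(τ_A⁻ N, A) ≠ 0`, where `τ_A⁻ N` is given by the almost split
sequence `0 → N → F → N' → 0`. -/
theorem hom_tauinv_A_ne_zero_of_id_ge_two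
    (K : Type u) [CommRing K] [IsArtinianRing K]
    (A : Type u) [Ring A] [Algebra K A] [Module.Finite K A]
    (N F N' : Modc A) (hN : FinGen N) (hNi : Indec N)
    (hni : ¬ Module.Injective Aᵐᵒᵖ N) (hid : ¬ IdLE1 N)
    (f : N →ₗ[Aᵐᵒᵖ] F) (g : F →ₗ[Aᵐᵒᵖ] N')
    (hars : IsAlmostSplitSeq N F N' f g) :
    ∃ φ : N' →ₗ[Aᵐᵒᵖ] A, φ ≠ 0 := by
  by_contra hcon0
  push_neg at hcon0
  obtain ⟨finj, gsurj, hexact, hNind, hN'ind, hgns, hright, hleft⟩ := hars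
  let I₀ : Modc A := CategoryTheory.Injective.under N
  let ι : N →ₗ[Aᵐᵒᵖ] I₀ := (CategoryTheory.Injective.ι N).hom
  have hι : Function.Injective ι :=
    (ModuleCat.mono_iff_injective (CategoryTheory.Injective.ι N)).1 inferInstance
  haveI hI₀inj : Module.Injective Aᵐᵒᵖ I₀ :=
    @Module.injective_module_of_injective_object _ _ _ _ _
      (CategoryTheory.Injective.injective_under (N : Modc A))
  have hcon1 : ∀ φ : N' →ₗ[Aᵐᵒᵖ] A, φ = 0 := fun φ => by
    by_contra hne
    exact hne (hcon0 φ) |>.elim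
  have key : ∀ (J : Ideal Aᵐᵒᵖ) (E : Type u) [AddCommGroup E] [Module Aᵐᵒᵖ E]
      (u : N →ₗ[Aᵐᵒᵖ] E) (π : E →ₗ[Aᵐᵒᵖ] ↥J),
      Function.Injective u → Function.Surjective π →
      LinearMap.range u = LinearMap.ker π →
      ∃ s : ↥J →ₗ[Aᵐᵒᵖ] E, π ∘ₗ s = LinearMap.id := by
    intro J E _ _ u π uinj πsurj hex
    refine key_lemma f g gsurj hexact hgns hleft hcon1 E (↥J) u π
      (opToA A ∘ₗ J.subtype) ?_ uinj πsurj hex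
    exact fun a b hab => J.injective_subtype (opToA_injective A hab)
  haveI hI₁inj : Module.Injective Aᵐᵒᵖ ((I₀ : Type u) ⧸ LinearMap.range ι) :=
    (baer_quotient ι hι key).injective
  exact hid ⟨I₀, ModuleCat.of Aᵐᵒᵖ ((I₀ : Type u) ⧸ LinearMap.range ι), ι,
    (LinearMap.range ι).mkQ, hI₀inj, hI₁inj, hι, Submodule.mkQ_surjective _,
    (Submodule.ker_mkQ _).symm⟩
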